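/- The process M(n) = min{M_1(n), M_2(n), …, M_{m−2}(n)}, where M_i(n) = A_i(n)·A_{i+1}(n) + n/m, is a supermartingale with respect to the filtration (F_n), i.e. E[M(n+1) | F_n] ≤ M(n) for every n ≥ 0. -/

import Mathlib

open MeasureTheory ProbabilityTheory Filter
open scoped ENNReal

/-- The `m` possible step vectors of the competition process on the `m - 1` gaps
(0-indexed): `step m 0 = -e₀`, `step m k = e_{k-1} - e_k` for `0 < k < m - 1`, and
`step m (m-1) = e_{m-2}`. -/
def step (m : ℕ) (k : Fin m) : Fin (m - 1) → ℤ := fun j =>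
  (if (j : ℕ) + 1 = (k : ℕ) then 1 else 0) - (if (j : ℕ) = (k : ℕ) then 1 else 0)

lemma step_abs_le (m : ℕ) (k : Fin m) (j : Fin (m - 1)) : |step m k j| ≤ 1 := by
  unfold step; split_ifs <;> simp

lemma step_ne_of_lt (m : ℕ) {k k' : Fin m} (hk : (k : ℕ) < m - 1) (hne : k ≠ k') :
    step m k ≠ step m k' := by
  intro h
  have hvne : (k : ℕ) ≠ (k' : ℕ) := fun h' => hne (Fin.ext h')
  have := congrFun h ⟨(k : ℕ), hk⟩
  simp only [step] at this
  split_ifs at this <;> omega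

lemma step_injective (m : ℕ) : Function.Injective (step m) := by
  intro k k' h
  by_contra hne
  rcases lt_or_ge (k : ℕ) (m - 1) with hk | hk
  · exact step_ne_of_lt m hk hne h
  · have hk' : (k' : ℕ) < m - 1 := by
      have h1 := k.isLt; have h2 := k'.isLt
      have : (k : ℕ) ≠ (k' : ℕ) := fun h' => hne (Fin.ext h')
      omega
    exact step_ne_of_lt m hk' (Ne.symm hne) h.symm

lemma step_sum (m : ℕ) (j : Fin (m - 1)) : ∑ k : Fin m, step m k j = 0 := by
  have hj := j.isLt
  unfold step
  rw [Finset.sum_sub_distrib]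
  rw [Fin.sum_univ_eq_sum_range (fun v => if (j : ℕ) + 1 = v then (1:ℤ) else 0)]
  rw [Fin.sum_univ_eq_sum_range (fun v => if (j : ℕ) = v then (1:ℤ) else 0)]
  rw [Finset.sum_ite_eq, Finset.sum_ite_eq]
  simp only [Finset.mem_range]
  rw [if_pos (by omega), if_pos (by omega)]
  ring

lemma step_prod_sum (m : ℕ) (i j : Fin (m - 1)) (hij : (j : ℕ) = (i : ℕ) + 1) :
    ∑ k : Fin m, step m k i * step m k j = -1 := by
  have hj := j.isLt
  have heq : ∀ k : Fin m, step m k i * step m k j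
      = -(if (i : ℕ) + 1 = (k : ℕ) then (1:ℤ) else 0) := by
    intro k; unfold step; rw [hij]; split_ifs <;> omega
  rw [Finset.sum_congr rfl fun k _ => heq k, Finset.sum_neg_distrib]
  rw [Fin.sum_univ_eq_sum_range (fun v => if (i : ℕ) + 1 = v then (1:ℤ) else 0)]
  rw [Finset.sum_ite_eq]
  simp only [Finset.mem_range]
  rw [if_pos (by omega)]

lemma integrable_inf' {Ω : Type*} [MeasurableSpace Ω] {μ : Measure Ω} {ι : Type*}
    (s : Finset ι) (hs : s.Nonempty) (f : ι → Ω → ℝ) (hf : ∀ i ∈ s, Integrable (f i) μ) :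
    Integrable (fun ω => s.inf' hs (fun i => f i ω)) μ := by
  refine Finset.Nonempty.cons_induction
    (motive := fun s hs => (∀ i ∈ s, Integrable (f i) μ) →
      Integrable (fun ω => s.inf' hs (fun i => f i ω)) μ)
    ?_ ?_ hs hf
  · intro a hf'
    exact (hf' a (by simp)).congr (ae_of_all _ fun ω => (Finset.inf'_singleton _).symm)
  · intro a t ha ht ih hf'
    refine (((hf' a (by simp)).inf
      (ih fun i hi => hf' i (Finset.mem_cons_of_mem hi))).congr
      (ae_of_all _ fun ω => ?_))
    exact (Finset.inf'_cons ht (fun i => f i ω)).symm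

/-- The minimum `M n = min {A_i n * A_{i+1} n + n / m : i adjacent}`
of the martingales of Statement 11 is a supermartingale with respect to the filtration
generated by the steps. -/
theorem stmt_12 (m : ℕ) (hm : 3 ≤ m)
{Ω : Type*} [MeasurableSpace Ω] (μ : Measure Ω) [IsProbabilityMeasure μ]
    (a : Fin (m - 1) → ℕ) (ha : ∀ k, 0 < a k)
    (ξ : ℕ → Ω → (Fin (m - 1) → ℤ))
    (hmeas : ∀ n, Measurable (ξ n))
    (hindep : iIndepFun ξ μ)
    (hunif : ∀ n (k : Fin m), μ {ω | ξ n ω = step m k} = 1 / m)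
    (A : ℕ → Ω → (Fin (m - 1) → ℤ))
    (hA0 : ∀ ω j, A 0 ω j = (a j : ℤ))
    (hA : ∀ n ω, A (n + 1) ω = A n ω + ξ n ω)
(ℱ : ℕ → MeasurableSpace Ω)
    (hℱ : ∀ n, ℱ n = ⨆ k ∈ Finset.range n, MeasurableSpace.comap (ξ k) inferInstance)
    (M : ℕ → Ω → ℝ)
    (hM : ∀ n ω, M n ω = sInf {x : ℝ | ∃ i j : Fin (m - 1), (j : ℕ) = (i : ℕ) + 1 ∧
      x = ((A n ω i * A n ω j : ℤ) : ℝ) + (n : ℝ) / m}) :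
    ∀ n : ℕ, μ[M (n + 1)|ℱ n] ≤ᵐ[μ] M n := by
  intro n
  have hm0 : (m : ℝ) ≠ 0 := Nat.cast_ne_zero.mpr (by omega)
  -- the sub-σ-algebras are all below the ambient one
  have hle : ∀ t, ℱ t ≤ ‹MeasurableSpace Ω› := by
    intro t; rw [hℱ]
    exact iSup₂_le fun k _ => (hmeas k).comap_le
  -- measurability of coordinates of A with respect to ℱ n (for t ≤ n) and ambient
  have hξml : ∀ (t : ℕ) (j : Fin (m - 1)), Measurable (fun ω => ξ t ω j) :=
    fun t j => (measurable_pi_apply j).comp (hmeas t)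
  have hAm0 : ∀ (t : ℕ) (j : Fin (m - 1)), Measurable (fun ω => A t ω j) := by
    intro t j
    induction t with
    | zero =>
      have : (fun ω => A 0 ω j) = fun _ => (a j : ℤ) := funext fun ω => hA0 ω j
      rw [this]; exact measurable_const
    | succ s ih =>
      have : (fun ω => A (s + 1) ω j) = fun ω => A s ω j + ξ s ω j := by
        funext ω; rw [hA s ω]; rfl
      rw [this]; exact ih.add (hξml s j)
  have hAmF : ∀ t ≤ n, ∀ (j : Fin (m - 1)), Measurable[ℱ n] (fun ω => A t ω j) := by
    intro t ht j
    induction t with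
    | zero =>
      have : (fun ω => A 0 ω j) = fun _ => (a j : ℤ) := funext fun ω => hA0 ω j
      rw [this]; exact measurable_const
    | succ s ih =>
      have hξF : Measurable[ℱ n] (ξ s) := by
        refine measurable_iff_comap_le.mpr ?_
        rw [hℱ]
        exact le_iSup₂ (f := fun (k : ℕ) (_ : k ∈ Finset.range n) =>
          MeasurableSpace.comap (ξ k) inferInstance) s (Finset.mem_range.mpr (by omega))
      have : (fun ω => A (s + 1) ω j) = fun ω => A s ω j + ξ s ω j := by
        funext ω; rw [hA s ω]; rfl
      rw [this]
      exact (ih (by omega)).add ((measurable_pi_apply j).comp hξF)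
  -- independence of ℱ n and σ(ξ n)
  have hindep' : Indep (ℱ n) (MeasurableSpace.comap (ξ n) inferInstance) μ := by
    rw [hℱ]
    have h := indep_iSup_of_disjoint (m := fun i => MeasurableSpace.comap (ξ i) inferInstance)
      (fun i => (hmeas i).comap_le) hindep
      (S := (↑(Finset.range n) : Set ℕ)) (T := {n}) (by simp)
    simpa using h
  -- a.e., every step lands in the range of `step`
  have hrange : ∀ᵐ ω ∂μ, ∀ t, ξ t ω ∈ Set.range (step m) := by
    rw [ae_all_iff]
    intro t
    have hms : ∀ k : Fin m, MeasurableSet {ω | ξ t ω = step m k} := fun k =>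
      hmeas t (measurableSet_singleton _)
    have hdisj : Pairwise (Function.onFun Disjoint (fun k => {ω | ξ t ω = step m k})) := by
      intro k k' hkk'
      refine Set.disjoint_left.mpr fun ω h1 h2 => hkk' ?_
      exact step_injective m ((Set.mem_setOf_eq ▸ h1).symm.trans h2 : step m k = step m k')
      -- fix above
    have h1 : μ (⋃ k : Fin m, {ω | ξ t ω = step m k}) = 1 := by
      rw [measure_iUnion hdisj hms]
      simp only [hunif t]
      rw [tsum_fintype]
      simp only [Finset.sum_const, Finset.card_univ, Fintype.card_fin, nsmul_eq_mul, one_div]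
      rw [ENNReal.mul_inv_cancel (by exact_mod_cast (by omega : m ≠ 0)) (by simp)]
    have hset : {ω | ξ t ω ∈ Set.range (step m)} = ⋃ k : Fin m, {ω | ξ t ω = step m k} := by
      ext ω; simp [Set.range, eq_comm]
    have : μ {ω | ξ t ω ∈ Set.range (step m)}ᶜ = 0 := by
      rw [hset]
      rw [measure_compl (MeasurableSet.iUnion hms) (measure_ne_top _ _), h1, measure_univ]
      simp
    exact this
  -- key distribution lemma: expectations of functions of a single step
  have hkey : ∀ (t : ℕ) (f : (Fin (m - 1) → ℤ) → ℝ),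
      Integrable (fun ω => f (ξ t ω)) μ ∧
        ∫ ω, f (ξ t ω) ∂μ = (∑ k : Fin m, f (step m k)) / m := by
    intro t f
    have hms : ∀ k : Fin m, MeasurableSet {ω | ξ t ω = step m k} := fun k =>
      hmeas t (measurableSet_singleton _)
    set g : Ω → ℝ := fun ω => ∑ k : Fin m,
      Set.indicator {ω' | ξ t ω' = step m k} (fun _ => f (step m k)) ω with hg
    have hae : (fun ω => f (ξ t ω)) =ᵐ[μ] g := by
      filter_upwards [hrange] with ω hω
      obtain ⟨k0, hk0⟩ := hω t
      have hterm : ∀ k : Fin m,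
          Set.indicator {ω' | ξ t ω' = step m k} (fun _ => f (step m k)) ω
            = if k = k0 then f (step m k0) else 0 := by
        intro k
        by_cases hk : k = k0
        · subst hk
          rw [Set.indicator_of_mem (by exact hk0.symm), if_pos rfl]
        · rw [Set.indicator_of_notMem]
          · rw [if_neg hk]
          · intro h
            exact hk (step_injective m ((h : ξ t ω = step m k) ▸ hk0 : step m k0 = step m k).symm)
            -- fix
      rw [hg]
      simp only [hterm, Finset.sum_ite_eq', Finset.mem_univ, if_pos, ← hk0]
    have hgint : Integrable g μ := by
      refine integrable_finset_sum _ fun k _ => ?_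
      exact (integrable_const _).indicator (hms k)
    refine ⟨hgint.congr hae.symm, ?_⟩
    rw [integral_congr_ae hae, hg, integral_finset_sum _ fun k _ =>
      (integrable_const _).indicator (hms k)]
    have : ∀ k : Fin m, ∫ ω, Set.indicator {ω' | ξ t ω' = step m k}
        (fun _ => f (step m k)) ω ∂μ = f (step m k) / m := by
      intro k
      rw [integral_indicator_const _ (hms k), measureReal_def, hunif t k, smul_eq_mul]
      rw [ENNReal.toReal_div]
      simp [div_mul_eq_mul_div, mul_comm, div_eq_mul_inv]
    rw [Finset.sum_congr rfl fun k _ => this k, ← Finset.sum_div]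
  -- a.e. bounds on A
  have hbd : ∀ᵐ ω ∂μ, ∀ (t : ℕ) (j : Fin (m - 1)), |A t ω j| ≤ (a j : ℤ) + t := by
    filter_upwards [hrange] with ω hω
    have hξb : ∀ (t : ℕ) (j : Fin (m - 1)), |ξ t ω j| ≤ 1 := by
      intro t j; obtain ⟨k, hk⟩ := hω t; rw [← hk]; exact step_abs_le m k j
    intro t j
    induction t with
    | zero => rw [hA0]; simp
    | succ s ih =>
      have h1 : A (s + 1) ω j = A s ω j + ξ s ω j := by rw [hA s ω]; rfl
      calc |A (s + 1) ω j| = |A s ω j + ξ s ω j| := by rw [h1]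
        _ ≤ |A s ω j| + |ξ s ω j| := abs_add_le _ _
        _ ≤ ((a j : ℤ) + s) + 1 := add_le_add ih (hξb s j)
        _ = (a j : ℤ) + (s + 1 : ℕ) := by push_cast; ring
  -- integrability of products of coordinates of A
  have hAcastm : ∀ (t : ℕ) (i : Fin (m - 1)), Measurable (fun ω => ((A t ω i : ℤ) : ℝ)) :=
    fun t i => (measurable_of_countable (Int.cast : ℤ → ℝ)).comp (hAm0 t i)
  have hAAint : ∀ (t s : ℕ) (i j : Fin (m - 1)),
      Integrable (fun ω => ((A t ω i : ℤ) : ℝ) * ((A s ω j : ℤ) : ℝ)) μ := by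
    intro t s i j
    refine Integrable.mono' (integrable_const (((a i : ℝ) + t) * ((a j : ℝ) + s)))
      (((hAcastm t i).mul (hAcastm s j)).aestronglyMeasurable) ?_
    filter_upwards [hbd] with ω hb
    have h1 : |((A t ω i : ℤ) : ℝ)| ≤ (a i : ℝ) + t := by exact_mod_cast hb t i
    have h2 : |((A s ω j : ℤ) : ℝ)| ≤ (a j : ℝ) + s := by exact_mod_cast hb s j
    rw [Real.norm_eq_abs, abs_mul]
    exact mul_le_mul h1 h2 (abs_nonneg _) (le_trans (abs_nonneg _) h1)
  have hFint : ∀ (t : ℕ) (i j : Fin (m - 1)),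
      Integrable (fun ω => ((A t ω i * A t ω j : ℤ) : ℝ) + (t : ℝ) / m) μ := by
    intro t i j
    have heq : (fun ω => ((A t ω i * A t ω j : ℤ) : ℝ) + (t : ℝ) / m)
        = fun ω => ((A t ω i : ℤ) : ℝ) * ((A t ω j : ℤ) : ℝ) + (t : ℝ) / m := by
      funext ω; push_cast; ring
    rw [heq]; exact (hAAint t t i j).add (integrable_const _)
  have hXdef : ∀ (ω : Ω) (j : Fin (m - 1)),
      ((ξ n ω j : ℤ) : ℝ) = ((A (n + 1) ω j : ℤ) : ℝ) - ((A n ω j : ℤ) : ℝ) := by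
    intro ω j
    have h1 : A (n + 1) ω j = A n ω j + ξ n ω j := by rw [hA n ω]; rfl
    rw [h1]; push_cast; ring
  have hBXint : ∀ (i j : Fin (m - 1)),
      Integrable (fun ω => ((A n ω i : ℤ) : ℝ) * ((ξ n ω j : ℤ) : ℝ)) μ := by
    intro i j
    have heq : (fun ω => ((A n ω i : ℤ) : ℝ) * ((ξ n ω j : ℤ) : ℝ))
        = fun ω => ((A n ω i : ℤ) : ℝ) * ((A (n + 1) ω j : ℤ) : ℝ)
          - ((A n ω i : ℤ) : ℝ) * ((A n ω j : ℤ) : ℝ) := by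
      funext ω; rw [hXdef ω j]; ring
    rw [heq]; exact (hAAint n (n + 1) i j).sub (hAAint n n i j)
  -- conditional expectation of functions of the fresh step
  have hcomapSM : ∀ f : (Fin (m - 1) → ℤ) → ℝ,
      StronglyMeasurable[MeasurableSpace.comap (ξ n) inferInstance] (fun ω => f (ξ n ω)) := by
    intro f
    have hξc : Measurable[MeasurableSpace.comap (ξ n) inferInstance] (ξ n) :=
      measurable_iff_comap_le.mpr le_rfl
    exact ((measurable_of_countable f).comp hξc).stronglyMeasurable
  have hcondξ : ∀ f : (Fin (m - 1) → ℤ) → ℝ,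
      μ[(fun ω => f (ξ n ω))|ℱ n] =ᵐ[μ] fun _ => (∑ k : Fin m, f (step m k)) / m := by
    intro f
    have h := condExp_indep_eq (μ := μ) ((hmeas n).comap_le) (hle n) (hcomapSM f) hindep'.symm
    rw [(hkey n f).2] at h
    exact h
  -- the one-step martingale property for each adjacent pair
  have hmart : ∀ i j : Fin (m - 1), (j : ℕ) = (i : ℕ) + 1 →
      μ[(fun ω => ((A (n + 1) ω i * A (n + 1) ω j : ℤ) : ℝ) + ((n + 1 : ℕ) : ℝ) / m)|ℱ n]
        =ᵐ[μ] fun ω => ((A n ω i * A n ω j : ℤ) : ℝ) + (n : ℝ) / m := by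
    intro i j hij
    set B : Fin (m - 1) → Ω → ℝ := fun i ω => ((A n ω i : ℤ) : ℝ) with hB
    set X : Fin (m - 1) → Ω → ℝ := fun i ω => ((ξ n ω i : ℤ) : ℝ) with hX
    have hsplit : (fun ω => ((A (n + 1) ω i * A (n + 1) ω j : ℤ) : ℝ) + ((n + 1 : ℕ) : ℝ) / m)
        = (fun ω => B i ω * B j ω) + ((fun ω => B i ω * X j ω) + ((fun ω => B j ω * X i ω)
          + (fun ω => X i ω * X j ω + ((n + 1 : ℕ) : ℝ) / m))) := by
      funext ω
      have h1 : A (n + 1) ω i = A n ω i + ξ n ω i := by rw [hA n ω]; rfl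
      have h2 : A (n + 1) ω j = A n ω j + ξ n ω j := by rw [hA n ω]; rfl
      simp only [Pi.add_apply, hB, hX]
      push_cast [h1, h2]
      ring
    rw [hsplit]
    have hBB : Integrable (fun ω => B i ω * B j ω) μ := hAAint n n i j
    have hBX1 : Integrable (fun ω => B i ω * X j ω) μ := hBXint i j
    have hBX2 : Integrable (fun ω => B j ω * X i ω) μ := hBXint j i
    have hXX : Integrable (fun ω => X i ω * X j ω + ((n + 1 : ℕ) : ℝ) / m) μ :=
      (hkey n (fun v => ((v i : ℤ) : ℝ) * ((v j : ℤ) : ℝ) + ((n + 1 : ℕ) : ℝ) / m)).1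
    have hBiSM : StronglyMeasurable[ℱ n] (B i) :=
      ((measurable_of_countable (Int.cast : ℤ → ℝ)).comp (hAmF n le_rfl i)).stronglyMeasurable
    have hBjSM : StronglyMeasurable[ℱ n] (B j) :=
      ((measurable_of_countable (Int.cast : ℤ → ℝ)).comp (hAmF n le_rfl j)).stronglyMeasurable
    have e1 : μ[(fun ω => B i ω * B j ω)|ℱ n] = fun ω => B i ω * B j ω :=
      condExp_of_stronglyMeasurable (hle n) (hBiSM.mul hBjSM) hBB
    have hXcond : ∀ l : Fin (m - 1), μ[X l|ℱ n] =ᵐ[μ] fun _ => (0 : ℝ) := by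
      intro l
      have h := hcondξ (fun v => ((v l : ℤ) : ℝ))
      have hz : (∑ k : Fin m, ((step m k l : ℤ) : ℝ)) / m = 0 := by
        have hs : ∑ k : Fin m, ((step m k l : ℤ) : ℝ) = ((∑ k : Fin m, step m k l : ℤ) : ℝ) := by
          push_cast; rfl
        rw [hs, step_sum m l]; simp
      refine h.trans ?_
      rw [hz]
    have hXint : ∀ l : Fin (m - 1), Integrable (X l) μ :=
      fun l => (hkey n (fun v => ((v l : ℤ) : ℝ))).1
    have e2 : μ[(fun ω => B i ω * X j ω)|ℱ n] =ᵐ[μ] fun _ => (0 : ℝ) := by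
      refine (condExp_mul_of_stronglyMeasurable_left hBiSM hBX1 (hXint j)).trans ?_
      filter_upwards [hXcond j] with ω hω
      simp only [Pi.mul_apply, hω]
      simp
    have e3 : μ[(fun ω => B j ω * X i ω)|ℱ n] =ᵐ[μ] fun _ => (0 : ℝ) := by
      refine (condExp_mul_of_stronglyMeasurable_left hBjSM hBX2 (hXint i)).trans ?_
      filter_upwards [hXcond i] with ω hω
      simp only [Pi.mul_apply, hω]
      simp
    have e4 : μ[(fun ω => X i ω * X j ω + ((n + 1 : ℕ) : ℝ) / m)|ℱ n]
        =ᵐ[μ] fun _ => (-1 : ℝ) / m + ((n + 1 : ℕ) : ℝ) / m := by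
      have h := hcondξ (fun v => ((v i : ℤ) : ℝ) * ((v j : ℤ) : ℝ) + ((n + 1 : ℕ) : ℝ) / m)
      refine h.trans ?_
      have hc : (∑ k : Fin m, (((step m k i : ℤ) : ℝ) * ((step m k j : ℤ) : ℝ)
          + ((n + 1 : ℕ) : ℝ) / m)) / m = (-1 : ℝ) / m + ((n + 1 : ℕ) : ℝ) / m := by
        rw [Finset.sum_add_distrib]
        have h1 : ∑ k : Fin m, ((step m k i : ℤ) : ℝ) * ((step m k j : ℤ) : ℝ) = -1 := by
          have hs : ∑ k : Fin m, ((step m k i : ℤ) : ℝ) * ((step m k j : ℤ) : ℝ)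
              = ((∑ k : Fin m, step m k i * step m k j : ℤ) : ℝ) := by push_cast; rfl
          rw [hs, step_prod_sum m i j hij]; simp
        have h2 : ∑ _k : Fin m, ((n + 1 : ℕ) : ℝ) / m = m * (((n + 1 : ℕ) : ℝ) / m) := by
          rw [Finset.sum_const, Finset.card_univ, Fintype.card_fin, nsmul_eq_mul]
        rw [h1, h2]
        field_simp
      rw [hc]
    -- put everything together
    have c1 := condExp_add (μ := μ) (m := ℱ n) hBB (hBX1.add (hBX2.add hXX))
    have c2 := condExp_add (μ := μ) (m := ℱ n) hBX1 (hBX2.add hXX)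
    have c3 := condExp_add (μ := μ) (m := ℱ n) hBX2 hXX
    refine c1.trans ?_
    rw [e1]
    filter_upwards [c2, c3, e2, e3, e4] with ω h2 h3 he2 he3 he4
    simp only [Pi.add_apply] at h2 h3 ⊢
    rw [h2, he2, h3, he3, he4]
    simp only [hB]
    push_cast
    field_simp
    ring
  -- the finite set of adjacent pairs
  classical
  set P : Finset (Fin (m - 1) × Fin (m - 1)) :=
    Finset.univ.filter (fun p => (p.2 : ℕ) = (p.1 : ℕ) + 1) with hPdef
  have hPne : P.Nonempty := ⟨(⟨0, by omega⟩, ⟨1, by omega⟩), by simp [hPdef]⟩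
  have hMrep : ∀ (t : ℕ) (ω : Ω), M t ω
      = P.inf' hPne (fun p => ((A t ω p.1 * A t ω p.2 : ℤ) : ℝ) + (t : ℝ) / m) := by
    intro t ω
    rw [hM t ω, Finset.inf'_eq_csInf_image]
    congr 1
    ext x
    constructor
    · rintro ⟨i, j, hij, rfl⟩
      exact ⟨(i, j), by simp [hPdef, hij], rfl⟩
    · rintro ⟨p, hp, rfl⟩
      exact ⟨p.1, p.2, by simpa [hPdef] using hp, rfl⟩
  have hMint : Integrable (M (n + 1)) μ := by
    have heq : M (n + 1) = fun ω => P.inf' hPne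
        (fun p => ((A (n + 1) ω p.1 * A (n + 1) ω p.2 : ℤ) : ℝ) + ((n + 1 : ℕ) : ℝ) / m) :=
      funext fun ω => hMrep (n + 1) ω
    rw [heq]
    exact integrable_inf' P hPne _ (fun p _ => hFint (n + 1) p.1 p.2)
  have hstep : ∀ p ∈ P, μ[M (n + 1)|ℱ n] ≤ᵐ[μ]
      fun ω => ((A n ω p.1 * A n ω p.2 : ℤ) : ℝ) + (n : ℝ) / m := by
    intro p hp
    have hle1 : M (n + 1) ≤ᵐ[μ] fun ω =>
        ((A (n + 1) ω p.1 * A (n + 1) ω p.2 : ℤ) : ℝ) + ((n + 1 : ℕ) : ℝ) / m := by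
      refine ae_of_all _ fun ω => ?_
      rw [hMrep (n + 1) ω]
      exact Finset.inf'_le _ hp
    have hij : (p.2 : ℕ) = (p.1 : ℕ) + 1 := by simpa [hPdef] using hp
    exact (condExp_mono hMint (hFint (n + 1) p.1 p.2) hle1).trans (hmart p.1 p.2 hij).le
  have hall : ∀ᵐ ω ∂μ, ∀ p ∈ P,
      (μ[M (n + 1)|ℱ n]) ω ≤ ((A n ω p.1 * A n ω p.2 : ℤ) : ℝ) + (n : ℝ) / m :=
    (eventually_all_finset P).mpr hstep
  filter_upwards [hall] with ω hω
  rw [hMrep n ω]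
  exact Finset.le_inf' _ _ fun p hp => hω p hp
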